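/- There exists an ideal I on ℕ such that I_{1/n} ∩ I* = ∅, yet there exists a set X ∉ I with I_X ∩ I* ≠ ∅. (Concretely, with k_n = ⌊n·ln(n+1)⌋, K = {k_n : n ∈ ℕ}, and I = {A ⊆ ℕ : A ∩ K finite}, one has I_{1/n} ∩ I* = ∅ but there is X ∈ I⁺ with K ∈ I_X.) -/

import Mathlib

open Filter Set

/-- `I` is an ideal on `ℕ`: it contains all finite sets, is closed under subsets and
finite unions, and `ℕ ∉ I`. -/
def IsIdealOnNat (I : Set (Set ℕ)) : Prop :=
  (∀ A : Set ℕ, A.Finite → A ∈ I) ∧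
  (∀ A B : Set ℕ, A ⊆ B → B ∈ I → A ∈ I) ∧
  (∀ A B : Set ℕ, A ∈ I → B ∈ I → A ∪ B ∈ I) ∧
  (Set.univ : Set ℕ) ∉ I

/-- For an infinite `X = {x₁ < x₂ < …} ⊆ ℕ`, `fX X i = 1 / xₙ` where `xₙ` is the least
element of `X` with `i ≤ xₙ` (equivalently, `i ∈ (x_{n-1}, xₙ]`, with `x₀ = 0`). -/
noncomputable def fX (X : Set ℕ) (i : ℕ) : ℝ :=
  1 / (sInf {x | x ∈ X ∧ i ≤ x} : ℕ)

def aSeq (m : ℕ) : ℕ := 2 ^ ((m + 1) ^ 2)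

lemma aSeq_pos (m : ℕ) : 0 < aSeq m := Nat.pow_pos (by norm_num)

lemma aSeq_strictMono : StrictMono aSeq := by
  intro m n h
  exact Nat.pow_lt_pow_right one_lt_two (by nlinarith)

lemma two_mul_aSeq_lt (m : ℕ) : 2 * aSeq m < aSeq (m + 1) := by
  have : 2 * aSeq m = 2 ^ ((m+1)^2 + 1) := by ring_nf; rw [aSeq]; ring
  rw [this, aSeq]
  exact Nat.pow_lt_pow_right one_lt_two (by ring_nf; nlinarith)

lemma lt_aSeq (m : ℕ) : m < aSeq m :=
  lt_of_lt_of_le Nat.lt_two_pow_self (Nat.pow_le_pow_right (by norm_num) (by nlinarith))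

def Xset : Set ℕ := Set.range aSeq
def Kset : Set ℕ := Xset ∪ ⋃ m, Set.Ioc (aSeq m) (2 * aSeq m)

lemma fX_mem (i : ℕ) (hi : i ∈ Xset) : fX Xset i = 1 / (i : ℝ) := by
  have hne : ({x | x ∈ Xset ∧ i ≤ x} : Set ℕ).Nonempty := ⟨i, hi, le_rfl⟩
  have h1 : sInf {x | x ∈ Xset ∧ i ≤ x} ≤ i := Nat.sInf_le ⟨hi, le_rfl⟩
  have h2 : i ≤ sInf {x | x ∈ Xset ∧ i ≤ x} := (Nat.sInf_mem hne).2
  rw [fX, le_antisymm h1 h2]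

lemma fX_block {m i : ℕ} (h1 : aSeq m < i) (h2 : i ≤ 2 * aSeq m) :
    fX Xset i = 1 / (aSeq (m + 1) : ℝ) := by
  have hmem : aSeq (m + 1) ∈ {x | x ∈ Xset ∧ i ≤ x} :=
    ⟨⟨m + 1, rfl⟩, h2.trans (two_mul_aSeq_lt m).le⟩
  have hle : sInf {x | x ∈ Xset ∧ i ≤ x} ≤ aSeq (m + 1) := Nat.sInf_le hmem
  have hge : aSeq (m + 1) ≤ sInf {x | x ∈ Xset ∧ i ≤ x} := by
    obtain ⟨⟨j, hj⟩, hij⟩ := Nat.sInf_mem ⟨_, hmem⟩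
    have hlt : aSeq m < aSeq j := by rw [hj]; exact h1.trans_le hij
    have : m < j := aSeq_strictMono.lt_iff_lt.mp hlt
    calc aSeq (m + 1) ≤ aSeq j := aSeq_strictMono.le_iff_le.mpr this
    _ = _ := hj
  rw [fX, le_antisymm hle hge]

lemma two_mul_le_aSeq_of_lt {m n : ℕ} (h : m < n) : 2 * aSeq m < aSeq n :=
  lt_of_lt_of_le (two_mul_aSeq_lt m) (aSeq_strictMono.le_iff_le.mpr h)

lemma blocks_disjoint {m n : ℕ} (h : m ≠ n) :
    Disjoint (Finset.Ioc (aSeq m) (2 * aSeq m)) (Finset.Ioc (aSeq n) (2 * aSeq n)) := by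
  wlog hmn : m < n generalizing m n
  · exact (this h.symm (h.lt_or_gt.resolve_left hmn)).symm
  rw [Finset.disjoint_left]
  intro i hi hi'
  simp only [Finset.mem_Ioc] at hi hi'
  have := (hi.2.trans_lt (two_mul_le_aSeq_of_lt hmn)).trans_le hi'.1.le
  omega

lemma Kset_infinite : Kset.Infinite := by
  have : Xset.Infinite := Set.infinite_range_of_injective aSeq_strictMono.injective
  exact this.mono (Set.subset_union_left)

lemma aSeq_cast_pos (m : ℕ) : (0:ℝ) < (aSeq m : ℝ) := by exact_mod_cast aSeq_pos m

lemma fX_nonneg (X : Set ℕ) (i : ℕ) : 0 ≤ fX X i := by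
  rw [fX]; positivity

lemma summable_G1 : Summable (Xset.indicator (fX Xset)) := by
  have key : ∀ m, Xset.indicator (fX Xset) (aSeq m) ≤ ((1:ℝ)/2)^(m+1) := by
    intro m
    rw [Set.indicator_of_mem (show aSeq m ∈ Xset from ⟨m, rfl⟩), fX_mem _ ⟨m, rfl⟩]
    rw [div_pow, one_pow, div_le_div_iff₀ (aSeq_cast_pos m) (by positivity), one_mul, one_mul]
    have : (2:ℕ)^(m+1) ≤ aSeq m := Nat.pow_le_pow_right (by norm_num) (by nlinarith)
    exact_mod_cast this
  have h1 : Summable ((Xset.indicator (fX Xset)) ∘ aSeq) := by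
    apply Summable.of_nonneg_of_le (fun m => Set.indicator_nonneg (fun i _ => fX_nonneg _ _) _) key
    exact (summable_geometric_two).comp_injective (add_left_injective 1)
  refine (Function.Injective.summable_iff aSeq_strictMono.injective ?_).mp h1
  intro x hx
  exact Set.indicator_of_notMem hx _

lemma aSeq_ratio (m : ℕ) : (aSeq m : ℝ) / (aSeq (m+1) : ℝ) ≤ ((1:ℝ)/2)^(m+1) := by
  rw [div_pow, one_pow, div_le_div_iff₀ (aSeq_cast_pos (m+1)) (by positivity)]
  have : (2:ℕ)^(m+1) * aSeq m ≤ aSeq (m+1) := by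
    rw [aSeq, aSeq, ← pow_add]
    exact Nat.pow_le_pow_right (by norm_num) (by ring_nf; nlinarith)
  rw [one_mul, mul_comm]
  exact_mod_cast this

def Uset : Set ℕ := ⋃ m, Set.Ioc (aSeq m) (2 * aSeq m)

lemma summable_G2 : Summable (Uset.indicator (fX Xset)) := by
  set G2 := Uset.indicator (fX Xset) with hG2
  have hnn : ∀ i, 0 ≤ G2 i := fun i => Set.indicator_nonneg (fun i _ => fX_nonneg _ _) _
  apply summable_of_sum_range_le (c := 2) hnn
  intro N
  set T := (Finset.range N).biUnion (fun m => Finset.Ioc (aSeq m) (2 * aSeq m)) with hT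
  have hsub : (Finset.range N).filter (fun i => G2 i ≠ 0) ⊆ T := by
    intro i hi
    simp only [Finset.mem_filter, Finset.mem_range] at hi
    obtain ⟨hiN, hne⟩ := hi
    have hiU : i ∈ Uset := by
      by_contra h
      exact hne (Set.indicator_of_notMem h _)
    obtain ⟨m, hm⟩ := Set.mem_iUnion.mp hiU
    refine Finset.mem_biUnion.mpr ⟨m, Finset.mem_range.mpr ?_, Finset.mem_Ioc.mpr hm⟩
    calc m < aSeq m := lt_aSeq m
    _ < i := hm.1
    _ < N := hiN
  calc ∑ i ∈ Finset.range N, G2 i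
      = ∑ i ∈ (Finset.range N).filter (fun i => G2 i ≠ 0), G2 i :=
        (Finset.sum_filter_ne_zero _).symm
    _ ≤ ∑ i ∈ T, G2 i := Finset.sum_le_sum_of_subset_of_nonneg hsub (fun i _ _ => hnn i)
    _ = ∑ m ∈ Finset.range N, ∑ i ∈ Finset.Ioc (aSeq m) (2 * aSeq m), G2 i :=
        Finset.sum_biUnion (fun m _ n _ hmn => blocks_disjoint hmn)
    _ ≤ ∑ m ∈ Finset.range N, ((1:ℝ)/2)^(m+1) := by
        apply Finset.sum_le_sum
        intro m _
        have : ∀ i ∈ Finset.Ioc (aSeq m) (2 * aSeq m), G2 i = 1 / (aSeq (m+1) : ℝ) := by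
          intro i hi
          rw [Finset.mem_Ioc] at hi
          rw [hG2, Set.indicator_of_mem (show i ∈ Uset from Set.mem_iUnion.mpr ⟨m, Set.mem_Ioc.mpr hi⟩), fX_block hi.1 hi.2]
        rw [Finset.sum_congr rfl this, Finset.sum_const, Nat.card_Ioc]
        have hc : 2 * aSeq m - aSeq m = aSeq m := by omega
        rw [hc, nsmul_eq_mul]
        calc (aSeq m : ℝ) * (1 / (aSeq (m+1) : ℝ)) = (aSeq m : ℝ) / (aSeq (m+1) : ℝ) := by ring
        _ ≤ _ := aSeq_ratio m
    _ ≤ ∑ m ∈ Finset.range N, ((1:ℝ)/2)^m := by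
        apply Finset.sum_le_sum
        intro m _
        apply pow_le_pow_of_le_one (by norm_num) (by norm_num)
        omega
    _ ≤ 2 := sum_geometric_two_le N

lemma summable_K_fX : Summable (Kset.indicator (fX Xset)) := by
  refine Summable.of_nonneg_of_le
    (fun i => Set.indicator_nonneg (fun i _ => fX_nonneg _ _) _)
    ?_ (summable_G1.add summable_G2)
  · intro i
    by_cases hi : i ∈ Kset
    · rcases hi with hX | hU
      · rw [Set.indicator_of_mem (show i ∈ Kset from Set.mem_union_left _ hX), Set.indicator_of_mem hX]
        exact le_add_of_nonneg_right (Set.indicator_nonneg (fun i _ => fX_nonneg _ _) _)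
      · rw [Set.indicator_of_mem (show i ∈ Kset from Set.mem_union_right _ hU),
          Set.indicator_of_mem (show i ∈ Uset from hU)]
        exact le_add_of_nonneg_left (Set.indicator_nonneg (fun i _ => fX_nonneg _ _) _)
    · rw [Set.indicator_of_notMem hi]
      exact add_nonneg (Set.indicator_nonneg (fun i _ => fX_nonneg _ _) _)
        (Set.indicator_nonneg (fun i _ => fX_nonneg _ _) _)

lemma half_le_block_sum (m : ℕ) :
    (1:ℝ)/2 ≤ ∑ i ∈ Finset.Ioc (aSeq m) (2 * aSeq m),
      Kset.indicator (fun n : ℕ => 1/(n:ℝ)) i := by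
  have hbd : ∀ i ∈ Finset.Ioc (aSeq m) (2 * aSeq m),
      (1:ℝ)/(2 * aSeq m : ℕ) ≤ Kset.indicator (fun n : ℕ => 1/(n:ℝ)) i := by
    intro i hi
    rw [Finset.mem_Ioc] at hi
    have hiK : i ∈ Kset :=
      Set.mem_union_right _ (Set.mem_iUnion.mpr ⟨m, Set.mem_Ioc.mpr hi⟩)
    rw [Set.indicator_of_mem hiK]
    have h0 : (0:ℝ) < i := by
      have := (aSeq_pos m).trans hi.1; exact_mod_cast this
    apply one_div_le_one_div_of_le h0
    exact_mod_cast hi.2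
  have := Finset.card_nsmul_le_sum _ _ _ hbd
  refine le_trans (le_of_eq ?_) this
  rw [Nat.card_Ioc]
  have hc : 2 * aSeq m - aSeq m = aSeq m := by omega
  have ha := aSeq_cast_pos m
  have h2 : ((2 * aSeq m : ℕ) : ℝ) = 2 * (aSeq m : ℝ) := by push_cast; ring
  rw [hc, nsmul_eq_mul, h2, mul_one_div,
    div_eq_div_iff two_ne_zero (ne_of_gt (by linarith : (0:ℝ) < 2 * (aSeq m:ℝ)))]
  ring

lemma not_summable_K_harmonic :
    ¬ Summable (Kset.indicator (fun n : ℕ => 1 / (n:ℝ))) := by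
  intro hS
  have hnn : ∀ i, 0 ≤ Kset.indicator (fun n : ℕ => 1/(n:ℝ)) i :=
    fun i => Set.indicator_nonneg (fun i _ => by positivity) _
  obtain ⟨M, hM⟩ := exists_nat_gt (2 * ∑' i, Kset.indicator (fun n : ℕ => 1/(n:ℝ)) i)
  set T := (Finset.range M).biUnion (fun m => Finset.Ioc (aSeq m) (2 * aSeq m)) with hT
  have key : (M:ℝ) * (1/2) ≤ ∑ i ∈ T, Kset.indicator (fun n : ℕ => 1/(n:ℝ)) i := by
    rw [hT, Finset.sum_biUnion (fun m _ n _ hmn => blocks_disjoint hmn)]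
    calc (M:ℝ) * (1/2) = ∑ _m ∈ Finset.range M, (1:ℝ)/2 := by
          rw [Finset.sum_const, Finset.card_range, nsmul_eq_mul]
      _ ≤ _ := Finset.sum_le_sum (fun m _ => half_le_block_sum m)
  have hle : ∑ i ∈ T, Kset.indicator (fun n : ℕ => 1/(n:ℝ)) i
      ≤ ∑' i, Kset.indicator (fun n : ℕ => 1/(n:ℝ)) i :=
    Summable.sum_le_tsum T (fun i _ => hnn i) hS
  linarith

/-- There is an ideal `I` on `ℕ` with `I_{1/n} ∩ I^* = ∅` for which nevertheless some
`X ∉ I` satisfies `I_X ∩ I^* ≠ ∅`. -/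
theorem exists_ideal_separating_conditions :
    ∃ I : Set (Set ℕ), IsIdealOnNat I ∧
      (∀ A : Set ℕ, Summable (A.indicator fun n : ℕ => 1 / (n : ℝ)) → Aᶜ ∉ I) ∧
      (∃ X : Set ℕ, X ∉ I ∧
        ∃ A : Set ℕ, Summable (A.indicator (fX X)) ∧ Aᶜ ∈ I) := by
  refine ⟨{A | (A ∩ Kset).Finite}, ⟨?_, ?_, ?_, ?_⟩, ?_, ?_⟩
  · exact fun A hA => hA.inter_of_left Kset
  · exact fun A B hAB hB => hB.subset (Set.inter_subset_inter_left _ hAB)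
  · intro A B hA hB
    simp only [Set.mem_setOf_eq] at *
    rw [Set.union_inter_distrib_right]
    exact hA.union hB
  · intro h
    simp only [Set.mem_setOf_eq, Set.univ_inter] at h
    exact Kset_infinite h
  · intro A hA hC
    simp only [Set.mem_setOf_eq] at hC
    apply not_summable_K_harmonic
    have hsum2 : Summable ((Aᶜ ∩ Kset).indicator (fun n : ℕ => 1/(n:ℝ))) :=
      summable_of_finite_support (hC.subset Set.support_indicator_subset)
    refine Summable.of_nonneg_of_le
      (fun i => Set.indicator_nonneg (fun i _ => by positivity) _)
      ?_ (hA.add hsum2)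
    intro i
    by_cases hiK : i ∈ Kset
    · rw [Set.indicator_of_mem hiK]
      by_cases hiA : i ∈ A
      · rw [show (A.indicator (fun n : ℕ => 1/(n:ℝ))) i = 1/(i:ℝ) from Set.indicator_of_mem hiA _]
        exact le_add_of_nonneg_right (Set.indicator_nonneg (fun i _ => by positivity) _)
      · rw [show ((Aᶜ ∩ Kset).indicator (fun n : ℕ => 1/(n:ℝ))) i = 1/(i:ℝ) from Set.indicator_of_mem (show i ∈ Aᶜ ∩ Kset from ⟨hiA, hiK⟩) _]
        exact le_add_of_nonneg_left (Set.indicator_nonneg (fun i _ => by positivity) _)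
    · rw [Set.indicator_of_notMem hiK]
      exact add_nonneg (Set.indicator_nonneg (fun i _ => by positivity) _)
        (Set.indicator_nonneg (fun i _ => by positivity) _)
  · refine ⟨Xset, ?_, Kset, summable_K_fX, ?_⟩
    · intro h
      simp only [Set.mem_setOf_eq] at h
      rw [Set.inter_eq_self_of_subset_left (show Xset ⊆ Kset from Set.subset_union_left)] at h
      exact Set.infinite_range_of_injective aSeq_strictMono.injective h
    · simp only [Set.mem_setOf_eq, Set.compl_inter_self]
      exact Set.finite_empty
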